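/- Let D_m(x) := (1/m) Σ_{l=1}^m cos((l−1/2)πx) and fix p > 1 and a ≥ 0. There exists a constant C_p (depending only on p) such that: for any positive integer m, any ρ > 0 with mρ ≤ 2a, any c ∈ ℝ, and any measurable function φ : ℝ → ℝ with |φ(u) − u| ≤ ρ for all u, one has m · ∫_{c−1}^{c+1} |D_m(φ(u) − c)|^p du ≤ C_p (for m sufficiently large depending only on a and p). -/

import Mathlib

open Real Finset MeasureTheory

/-- The half-integer-frequency Dirichlet-type kernel
`D_m(x) = (1/m) Σ_{l=1}^m cos((l−1/2)πx)`. -/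
noncomputable def Dm (m : ℕ) (x : ℝ) : ℝ :=
  (1 / (m : ℝ)) * ∑ l ∈ Finset.Icc 1 m, Real.cos (((l : ℝ) - 1 / 2) * π * x)

lemma sum_cos_eq (m : ℕ) (x : ℝ) :
    2 * Real.sin (π * x / 2) * ∑ l ∈ Finset.Icc 1 m, Real.cos (((l : ℝ) - 1 / 2) * π * x)
      = Real.sin ((m : ℝ) * π * x) := by
  induction m with
  | zero => simp
  | succ n ih =>
    have key : Real.sin (((n : ℝ) + 1) * π * x) - Real.sin ((n : ℝ) * π * x)
        = 2 * Real.sin (π * x / 2) * Real.cos ((((n + 1 : ℕ) : ℝ) - 1 / 2) * π * x) := by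
      rw [Real.sin_sub_sin]
      push_cast
      ring_nf
    rw [Finset.sum_Icc_succ_top (by omega : 1 ≤ n + 1), mul_add, ih]
    push_cast at key ⊢
    linarith

lemma abs_Dm_le_one {m : ℕ} (hm : 1 ≤ m) (x : ℝ) : |Dm m x| ≤ 1 := by
  have hm0 : (0 : ℝ) < m := by exact_mod_cast hm
  have hsum : |∑ l ∈ Finset.Icc 1 m, Real.cos (((l : ℝ) - 1 / 2) * π * x)| ≤ (m : ℝ) := by
    calc |∑ l ∈ Finset.Icc 1 m, Real.cos (((l : ℝ) - 1 / 2) * π * x)|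
        ≤ ∑ l ∈ Finset.Icc 1 m, |Real.cos (((l : ℝ) - 1 / 2) * π * x)| :=
          Finset.abs_sum_le_sum_abs _ _
      _ ≤ ∑ l ∈ Finset.Icc 1 m, 1 :=
          Finset.sum_le_sum fun i _ => Real.abs_cos_le_one _
      _ = (m : ℝ) := by simp
  rw [Dm, abs_mul, abs_of_nonneg (by positivity : (0:ℝ) ≤ 1 / (m:ℝ))]
  rw [div_mul_eq_mul_div, one_mul, div_le_one hm0]
  exact hsum

lemma abs_Dm_le {m : ℕ} (hm : 1 ≤ m) {x t : ℝ} (ht : 0 < t)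
    (hsin : t ≤ |Real.sin (π * x / 2)|) :
    |Dm m x| ≤ 1 / (2 * (m : ℝ) * t) := by
  have hm0 : (0 : ℝ) < m := by exact_mod_cast hm
  have h := sum_cos_eq m x
  set S := ∑ l ∈ Finset.Icc 1 m, Real.cos (((l : ℝ) - 1 / 2) * π * x) with hS
  have habs : 2 * |Real.sin (π * x / 2)| * |S| ≤ 1 := by
    have : |2 * Real.sin (π * x / 2) * S| = |Real.sin ((m:ℝ) * π * x)| := by rw [h]
    have h1 : |Real.sin ((m:ℝ) * π * x)| ≤ 1 := Real.abs_sin_le_one _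
    calc 2 * |Real.sin (π * x / 2)| * |S| = |2 * Real.sin (π * x / 2) * S| := by
          rw [abs_mul, abs_mul, abs_two]
      _ ≤ 1 := by rw [this]; exact h1
  have hSle : 2 * t * |S| ≤ 1 := by
    have := mul_le_mul_of_nonneg_right (by linarith [hsin] : 2 * t ≤ 2 * |Real.sin (π * x / 2)|)
      (abs_nonneg S)
    linarith
  rw [Dm, abs_mul, abs_of_nonneg (by positivity : (0:ℝ) ≤ 1 / (m:ℝ))]
  rw [div_mul_eq_mul_div, one_mul, div_le_div_iff₀ hm0 (by positivity)]
  nlinarith [abs_nonneg S]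

lemma sin_lower {x t : ℝ} (ht0 : 0 ≤ t) (ht1 : t ≤ 1) (h1 : t ≤ |x|) (h2 : |x| ≤ 2 - t) :
    t ≤ |Real.sin (π * x / 2)| := by
  have hy0 : (0:ℝ) ≤ |x| := abs_nonneg x
  have hy2 : |x| ≤ 2 := by linarith
  have habs : |Real.sin (π * x / 2)| = Real.sin (π * |x| / 2) := by
    rcases le_or_gt 0 x with hx | hx
    · rw [abs_of_nonneg hx, abs_of_nonneg]
      apply Real.sin_nonneg_of_nonneg_of_le_pi
      · positivity
      · nlinarith [Real.pi_pos, abs_of_nonneg hx]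
    · rw [abs_of_neg hx]
      have : π * x / 2 = -(π * (-x) / 2) := by ring
      rw [this, Real.sin_neg, abs_neg, abs_of_nonneg]
      apply Real.sin_nonneg_of_nonneg_of_le_pi
      · nlinarith [Real.pi_pos]
      · nlinarith [Real.pi_pos, abs_of_neg hx]
  rw [habs]
  set y := |x| with hy
  have key : ∀ z : ℝ, t ≤ z → z ≤ 1 → t ≤ Real.sin (π * z / 2) := by
    intro z hz1 hz2
    have h0z : 0 ≤ z := le_trans ht0 hz1
    have := Real.mul_le_sin (x := π * z / 2) (by positivity)
      (by nlinarith [Real.pi_pos])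
    calc t ≤ z := hz1
      _ = 2 / π * (π * z / 2) := by field_simp
      _ ≤ Real.sin (π * z / 2) := this
  rcases le_or_gt y 1 with hcase | hcase
  · exact key y h1 hcase
  · have : Real.sin (π * y / 2) = Real.sin (π * (2 - y) / 2) := by
      rw [show π * (2 - y) / 2 = π - π * y / 2 by ring, Real.sin_pi_sub]
    rw [this]
    exact key (2 - y) (by linarith) (by linarith)

lemma Dm_pointwise {m : ℕ} (hm : 1 ≤ m) {ρ x w : ℝ} (hρ : 0 < ρ)
    (hx : |x - w| ≤ ρ) (hw : |w| ≤ 1) :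
    |Dm m x| ≤ 2 / (1 + (m : ℝ) * max (|w| - ρ) 0) := by
  have hm0 : (0 : ℝ) < m := by exact_mod_cast hm
  set t := max (|w| - ρ) 0 with htdef
  have ht0 : 0 ≤ t := le_max_right _ _
  have ht1 : t ≤ 1 := by
    rcases max_cases (|w| - ρ) 0 with ⟨h, _⟩ | ⟨h, _⟩ <;> rw [htdef, h] <;> [linarith; norm_num]
  have hden : (0:ℝ) < 1 + (m:ℝ) * t := by positivity
  rcases eq_or_lt_of_le ht0 with h0 | h0
  · rw [← h0]
    have := abs_Dm_le_one hm x
    calc |Dm m x| ≤ 1 := this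
      _ ≤ 2 / (1 + (m:ℝ) * 0) := by norm_num
  · -- t = |w| - ρ > 0
    have htw : t = |w| - ρ := by
      rcases max_cases (|w| - ρ) 0 with ⟨h, _⟩ | ⟨h, hle⟩
      · rw [htdef, h]
      · rw [htdef, h] at h0; exact absurd h0 (lt_irrefl 0)
    have h1 : t ≤ |x| := by
      have := abs_sub_abs_le_abs_sub w x
      rw [abs_sub_comm w x] at this
      rw [htw]; linarith
    have h2 : |x| ≤ 2 - t := by
      have := abs_sub_abs_le_abs_sub x w
      rw [htw]; linarith
    have hsin := sin_lower ht0 ht1 h1 h2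
    have hD := abs_Dm_le hm h0 hsin
    have hD1 := abs_Dm_le_one hm x
    rw [le_div_iff₀ hden]
    have h2mt : |Dm m x| * (2 * (m:ℝ) * t) ≤ 1 := by
      have := mul_le_mul_of_nonneg_right hD (by positivity : (0:ℝ) ≤ 2 * (m:ℝ) * t)
      rw [div_mul_cancel₀] at this
      · exact this
      · positivity
    nlinarith [abs_nonneg (Dm m x), mul_le_mul_of_nonneg_right hD1
      (by positivity : (0:ℝ) ≤ (m:ℝ) * t)]

theorem stmt11 (p : ℝ) (hp : 1 < p) (a : ℝ) (ha : 0 ≤ a) :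
    ∃ C : ℝ, ∃ M : ℕ, ∀ m : ℕ, M ≤ m → ∀ ρ : ℝ, 0 < ρ → (m : ℝ) * ρ ≤ 2 * a →
      ∀ c : ℝ, ∀ φ : ℝ → ℝ, Measurable φ → (∀ u : ℝ, |φ u - u| ≤ ρ) →
        (m : ℝ) * ∫ u in (c - 1)..(c + 1), |Dm m (φ u - c)| ^ p ≤ C := by
  have hp0 : (0:ℝ) < p := lt_trans zero_lt_one hp
  refine ⟨2 ^ p * (4 * a + 2 / (p - 1) + 2), ⌈2 * a⌉₊ + 1, ?_⟩
  intro m hM ρ hρ hmρ c φ hφ hφρ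
  have hm1 : 1 ≤ m := le_trans (Nat.le_add_left 1 _) hM
  have hm0 : (0:ℝ) < m := by exact_mod_cast hm1
  have h2am : 2 * a < (m : ℝ) := by
    have h1 : (2 : ℝ) * a ≤ (⌈2 * a⌉₊ : ℝ) := Nat.le_ceil _
    have h2 : (⌈2 * a⌉₊ : ℝ) < m := by exact_mod_cast Nat.lt_of_lt_of_le (Nat.lt_succ_self _) hM
    linarith
  have hρ1 : ρ < 1 := by nlinarith
  -- shift to c = 0
  set ψ : ℝ → ℝ := fun w => φ (w + c) - c with hψdef
  have hψm : Measurable ψ := (hφ.comp (measurable_add_const c)).sub_const c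
  have hψρ : ∀ w, |ψ w - w| ≤ ρ := by
    intro w
    have := hφρ (w + c)
    rw [show φ (w + c) - (w + c) = φ (w + c) - c - w by ring] at this
    exact this
  have hshift : (∫ u in (c - 1)..(c + 1), |Dm m (φ u - c)| ^ p)
      = ∫ w in (-1:ℝ)..(1:ℝ), |Dm m (ψ w)| ^ p := by
    have h := intervalIntegral.integral_comp_add_right (a := (-1:ℝ)) (b := 1)
      (fun u => |Dm m (φ u - c)| ^ p) c
    rw [show (-1:ℝ) + c = c - 1 by ring, show (1:ℝ) + c = c + 1 by ring] at h
    rw [← h]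
  -- the comparison function
  set gfun : ℝ → ℝ := fun w => (2 / (1 + (m:ℝ) * max (|w| - ρ) 0)) ^ p with hgdef
  have hposden : ∀ w : ℝ, (0:ℝ) < 1 + (m:ℝ) * max (|w| - ρ) 0 := by
    intro w
    have h1 : (0:ℝ) ≤ max (|w| - ρ) 0 := le_max_right _ _
    nlinarith
  have hgcont : Continuous gfun := by
    have h1 : Continuous fun w : ℝ => 1 + (m:ℝ) * max (|w| - ρ) 0 := by
      apply continuous_const.add
      exact continuous_const.mul ((continuous_abs.sub continuous_const).max continuous_const)
    exact (continuous_const.div h1 (fun w => (hposden w).ne')).rpow_const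
      (fun w => Or.inr hp0.le)
  have hgint : ∀ x y : ℝ, IntervalIntegrable gfun volume x y :=
    fun x y => hgcont.intervalIntegrable x y
  have hDmc : Continuous fun x : ℝ => |Dm m x| ^ p := by
    have h1 : Continuous (Dm m) := by
      unfold Dm
      exact continuous_const.mul (continuous_finset_sum _ fun l _ =>
        Real.continuous_cos.comp (continuous_const.mul continuous_id))
    exact (continuous_abs.comp h1).rpow_const (fun x => Or.inr hp0.le)
  have hfint : IntervalIntegrable (fun w => |Dm m (ψ w)| ^ p) volume (-1) 1 := by
    apply IntervalIntegrable.mono_fun' (g := fun _ : ℝ => (1:ℝ)) intervalIntegrable_const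
    · exact (hDmc.measurable.comp hψm).aestronglyMeasurable
    · apply Filter.Eventually.of_forall
      intro w
      simp only [Real.norm_eq_abs]
      rw [abs_of_nonneg (Real.rpow_nonneg (abs_nonneg _) p)]
      exact Real.rpow_le_one (abs_nonneg _) (abs_Dm_le_one hm1 _) hp0.le
  have hmono : (∫ w in (-1:ℝ)..1, |Dm m (ψ w)| ^ p) ≤ ∫ w in (-1:ℝ)..1, gfun w := by
    apply intervalIntegral.integral_mono_on (by norm_num) hfint (hgint _ _)
    intro w hw
    exact Real.rpow_le_rpow (abs_nonneg _)
      (Dm_pointwise hm1 hρ (hψρ w) (abs_le.mpr ⟨hw.1, hw.2⟩)) hp0.le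
  -- symmetry
  have hgeven : ∀ w : ℝ, gfun (-w) = gfun w := by
    intro w; simp only [hgdef, abs_neg]
  have hsym : (∫ w in (-1:ℝ)..(0:ℝ), gfun w) = ∫ w in (0:ℝ)..(1:ℝ), gfun w := by
    have h := intervalIntegral.integral_comp_neg (a := (0:ℝ)) (b := 1) gfun
    simp only [neg_zero] at h
    rw [← h]
    exact intervalIntegral.integral_congr (fun w _ => hgeven w)
  have hadd : (∫ w in (-1:ℝ)..1, gfun w)
      = (∫ w in (-1:ℝ)..(0:ℝ), gfun w) + ∫ w in (0:ℝ)..(1:ℝ), gfun w :=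
    (intervalIntegral.integral_add_adjacent_intervals (hgint _ _) (hgint _ _)).symm
  -- on [0, ρ]
  have hI1 : (∫ w in (0:ℝ)..ρ, gfun w) = ρ * 2 ^ p := by
    rw [intervalIntegral.integral_congr (g := fun _ : ℝ => (2:ℝ) ^ p) ?_]
    · simp
    · intro w hw
      rw [Set.uIcc_of_le hρ.le] at hw
      simp only [hgdef]
      rw [abs_of_nonneg hw.1, max_eq_right (by linarith [hw.2]), mul_zero, add_zero, div_one]
  -- on [ρ, 1]
  set d : ℝ := 1 - (m:ℝ) * ρ with hddef
  set B : ℝ := (m:ℝ) * 1 + d with hBdef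
  have hB1 : (1:ℝ) ≤ B := by
    simp only [hBdef, hddef]
    nlinarith [hρ1]
  have hI2eq : (∫ w in ρ..(1:ℝ), gfun w)
      = 2 ^ p * ∫ w in ρ..(1:ℝ), ((m:ℝ) * w + d) ^ (-p) := by
    rw [← intervalIntegral.integral_const_mul]
    apply intervalIntegral.integral_congr
    intro w hw
    rw [Set.uIcc_of_le hρ1.le] at hw
    have hwρ : ρ ≤ w := hw.1
    have hX : (0:ℝ) < (m:ℝ) * w + d := by simp only [hddef]; nlinarith
    have habs : |w| = w := abs_of_nonneg (le_trans hρ.le hwρ)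
    have hmax : max (|w| - ρ) 0 = w - ρ := by rw [habs]; exact max_eq_left (by linarith)
    simp only [hgdef, hmax]
    rw [show (1:ℝ) + (m:ℝ) * (w - ρ) = (m:ℝ) * w + d by simp only [hddef]; ring]
    rw [Real.div_rpow (by norm_num) hX.le, Real.rpow_neg hX.le, div_eq_mul_inv]
  have hcomp : (∫ w in ρ..(1:ℝ), ((m:ℝ) * w + d) ^ (-p))
      = ((m:ℝ))⁻¹ * ((B ^ (-p + 1) - 1) / (-p + 1)) := by
    rw [intervalIntegral.integral_comp_mul_add (f := fun x : ℝ => x ^ (-p)) hm0.ne' d]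
    rw [show (m:ℝ) * ρ + d = 1 by simp only [hddef]; ring]
    rw [integral_rpow (Or.inr ⟨by intro h; linarith [neg_eq_iff_eq_neg.mp h], ?_⟩),
      Real.one_rpow, ← hBdef, smul_eq_mul]
    rw [Set.uIcc_of_le (by rw [← hBdef]; exact hB1)]
    intro h0
    have h00 : (1:ℝ) ≤ 0 := h0.1
    linarith
  have hI2le : (∫ w in ρ..(1:ℝ), gfun w) ≤ 2 ^ p * (((m:ℝ))⁻¹ * (1 / (p - 1))) := by
    rw [hI2eq, hcomp]
    have h2p : (0:ℝ) < (2:ℝ) ^ p := Real.rpow_pos_of_pos (by norm_num) p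
    have hBp : (0:ℝ) ≤ B ^ (-p + 1) := Real.rpow_nonneg (by linarith) _
    have hper : (B ^ (-p + 1) - 1) / (-p + 1) = (1 - B ^ (-p + 1)) / (p - 1) := by
      have h1 : -p + 1 ≠ 0 := by intro h; linarith
      have h2 : p - 1 ≠ 0 := by intro h; linarith
      field_simp
      ring
    rw [hper]
    have hfrac : (1 - B ^ (-p + 1)) / (p - 1) ≤ 1 / (p - 1) := by
      gcongr
      · linarith
    apply mul_le_mul_of_nonneg_left ?_ h2p.le
    apply mul_le_mul_of_nonneg_left hfrac (by positivity)
  have hsplit01 : (∫ w in (0:ℝ)..1, gfun w)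
      = (∫ w in (0:ℝ)..ρ, gfun w) + ∫ w in ρ..(1:ℝ), gfun w :=
    (intervalIntegral.integral_add_adjacent_intervals (hgint _ _) (hgint _ _)).symm
  have htot : (∫ w in (-1:ℝ)..1, gfun w)
      ≤ 2 * (ρ * 2 ^ p + 2 ^ p * (((m:ℝ))⁻¹ * (1 / (p - 1)))) := by
    rw [hadd, hsym, hsplit01, hI1]
    linarith [hI2le]
  rw [hshift]
  have h2p : (0:ℝ) < (2:ℝ) ^ p := Real.rpow_pos_of_pos (by norm_num) p
  calc (m:ℝ) * ∫ w in (-1:ℝ)..1, |Dm m (ψ w)| ^ p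
      ≤ (m:ℝ) * ∫ w in (-1:ℝ)..1, gfun w := mul_le_mul_of_nonneg_left hmono hm0.le
    _ ≤ (m:ℝ) * (2 * (ρ * 2 ^ p + 2 ^ p * (((m:ℝ))⁻¹ * (1 / (p - 1))))) :=
        mul_le_mul_of_nonneg_left htot hm0.le
    _ = 2 ^ p * (2 * ((m:ℝ) * ρ) + 2 / (p - 1)) := by
        have h2 : p - 1 ≠ 0 := by intro h; linarith
        field_simp
    _ ≤ 2 ^ p * (4 * a + 2 / (p - 1) + 2) := by
        apply mul_le_mul_of_nonneg_left ?_ h2p.le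
        linarith
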